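/- Consider the semi-discrete Fisher-Kolmogorov system c_j'(t) = -Σ_i L_{ji} c_i(t) + α_j c_j(t)(1 - c_j(t)) on a finite graph with Laplacian L (nonnegative weights) and α_j ≥ 0. If the initial data satisfies 0 ≤ c_j(0) ≤ 1 for all j, then 0 ≤ c_j(t) ≤ 1 for all t ≥ 0 and all j. -/

import Mathlib

open Filter Finset Set
open scoped Topology

/-- Distance-type function to the interval `[0,1]`. -/
private noncomputable def fkphi (x : ℝ) : ℝ := max (max (x - 1) (-x)) 0

private lemma fkphi_nonneg (x : ℝ) : 0 ≤ fkphi x := le_max_right _ _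

private lemma sub_one_le_fkphi (x : ℝ) : x - 1 ≤ fkphi x :=
  le_trans (le_max_left _ _) (le_max_left _ _)

private lemma neg_le_fkphi (x : ℝ) : -x ≤ fkphi x :=
  le_trans (le_max_right _ _) (le_max_left _ _)

private lemma fkphi_continuous : Continuous fkphi := by
  unfold fkphi; fun_prop

private lemma fkphi_of_one_le {x : ℝ} (h : 1 ≤ x) : fkphi x = x - 1 := by
  unfold fkphi
  rw [max_eq_left (by linarith : -x ≤ x - 1), max_eq_left (by linarith : (0:ℝ) ≤ x - 1)]

private lemma fkphi_of_nonpos {x : ℝ} (h : x ≤ 0) : fkphi x = -x := by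
  unfold fkphi
  rw [max_eq_right (by linarith : x - 1 ≤ -x), max_eq_left (by linarith : (0:ℝ) ≤ -x)]

private lemma fkphi_of_nonneg {x : ℝ} (h : 0 ≤ x) : fkphi x = max (x - 1) 0 := by
  unfold fkphi
  rw [max_assoc, max_eq_right (by linarith : -x ≤ (0:ℝ))]

private lemma fkphi_of_le_one {x : ℝ} (h : x ≤ 1) : fkphi x = max (-x) 0 := by
  unfold fkphi
  rw [max_assoc]
  exact max_eq_right (le_trans (by linarith : x - 1 ≤ (0:ℝ)) (le_max_right _ _))

private lemma fkphi_eq_zero {x : ℝ} (h0 : 0 ≤ x) (h1 : x ≤ 1) : fkphi x = 0 := by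
  rw [fkphi_of_nonneg h0]
  exact max_eq_right (by linarith)

private lemma ev_slope_upper {g : ℝ → ℝ} {d x : ℝ} (hg : HasDerivAt g d x) {η : ℝ}
    (hη : 0 < η) : ∀ᶠ z in 𝓝[>] x, g z - g x ≤ (z - x) * (d + η) := by
  have h1 : Tendsto (slope g x) (𝓝[≠] x) (𝓝 d) := hasDerivAt_iff_tendsto_slope.mp hg
  have h2 : Tendsto (slope g x) (𝓝[>] x) (𝓝 d) :=
    h1.mono_left (nhdsWithin_mono x fun z hz => ne_of_gt hz)
  have h3 : ∀ᶠ z in 𝓝[>] x, slope g x z < d + η :=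
    h2.eventually (eventually_lt_nhds (by linarith))
  filter_upwards [h3, self_mem_nhdsWithin] with z hz hzx
  have hzx' : (0:ℝ) < z - x := by
    have : x < z := hzx
    linarith
  rw [slope_def_field] at hz
  have h4 := (div_lt_iff₀ hzx').mp hz
  nlinarith

private lemma ev_slope_lower {g : ℝ → ℝ} {d x : ℝ} (hg : HasDerivAt g d x) {η : ℝ}
    (hη : 0 < η) : ∀ᶠ z in 𝓝[>] x, (z - x) * (d - η) ≤ g z - g x := by
  have h1 : Tendsto (slope g x) (𝓝[≠] x) (𝓝 d) := hasDerivAt_iff_tendsto_slope.mp hg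
  have h2 : Tendsto (slope g x) (𝓝[>] x) (𝓝 d) :=
    h1.mono_left (nhdsWithin_mono x fun z hz => ne_of_gt hz)
  have h3 : ∀ᶠ z in 𝓝[>] x, d - η < slope g x z :=
    h2.eventually (eventually_gt_nhds (by linarith))
  filter_upwards [h3, self_mem_nhdsWithin] with z hz hzx
  have hzx' : (0:ℝ) < z - x := by
    have : x < z := hzx
    linarith
  rw [slope_def_field] at hz
  have h4 := (lt_div_iff₀ hzx').mp hz
  nlinarith

open Finset in
/-- Invariance of `[0,1]^M` for the semi-discrete Fisher-Kolmogorov system on a graph. -/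
theorem semidiscrete_FK_invariant
    (M : ℕ) (w : Fin M → Fin M → ℝ)
    (hsymm : ∀ i j, w i j = w j i) (hnonneg : ∀ i j, 0 ≤ w i j)
    (L : Fin M → Fin M → ℝ)
    (hL : ∀ j i, L j i = if j = i then ∑ k ∈ univ.filter (· ≠ j), w j k else -w j i)
    (α : Fin M → ℝ) (hα : ∀ j, 0 ≤ α j)
    (c : ℝ → Fin M → ℝ)
    (hode : ∀ j, ∀ t : ℝ, 0 ≤ t →
      HasDerivAt (fun s => c s j)
        (-(∑ i, L j i * c t i) + α j * c t j * (1 - c t j)) t)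
    (hinit : ∀ j, 0 ≤ c 0 j ∧ c 0 j ≤ 1) :
    ∀ t : ℝ, 0 ≤ t → ∀ j, 0 ≤ c t j ∧ c t j ≤ 1 := by
  classical
  -- rewrite the ODE in graph form
  have hfilter : ∀ j : Fin M, univ.filter (· ≠ j) = univ.erase j := fun j =>
    Finset.filter_ne' univ j
  have hderiv : ∀ (j : Fin M) (x : ℝ), 0 ≤ x → HasDerivAt (fun s => c s j)
      ((∑ i ∈ univ.erase j, w j i * (c x i - c x j)) + α j * c x j * (1 - c x j)) x := by
    intro j x hx
    convert hode j x hx using 2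
    have h1 : ∑ i, L j i * c x i
        = L j j * c x j + ∑ i ∈ univ.erase j, L j i * c x i :=
      (Finset.add_sum_erase univ (fun i => L j i * c x i) (Finset.mem_univ j)).symm
    have h2 : L j j = ∑ k ∈ univ.erase j, w j k := by
      rw [hL j j, if_pos rfl, hfilter j]
    have h3 : ∑ i ∈ univ.erase j, L j i * c x i
        = -∑ i ∈ univ.erase j, w j i * c x i := by
      rw [← Finset.sum_neg_distrib]
      refine Finset.sum_congr rfl fun i hi => ?_
      rw [hL j i, if_neg (fun h => (Finset.ne_of_mem_erase hi) h.symm)]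
      ring
    rw [h1, h2, h3, Finset.sum_mul]
    have h4 : -(∑ i ∈ Finset.univ.erase j, w j i * c x j
        + -∑ i ∈ Finset.univ.erase j, w j i * c x i)
        = ∑ i ∈ Finset.univ.erase j, (w j i * c x i - w j i * c x j) := by
      rw [Finset.sum_sub_distrib]; ring
    rw [h4]
    exact Finset.sum_congr rfl fun i _ => by ring
  intro t ht
  set f : ℝ → ℝ := fun s => ∑ i, fkphi (c s i) with hf_def
  have hfnonneg : ∀ s, 0 ≤ f s := fun s => Finset.sum_nonneg fun i _ => fkphi_nonneg _
  have hphi_le_f : ∀ s (j : Fin M), fkphi (c s j) ≤ f s := fun s j =>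
    Finset.single_le_sum (fun i _ => fkphi_nonneg _) (Finset.mem_univ j)
  have hcont : ContinuousOn f (Icc 0 t) := by
    apply continuousOn_finset_sum
    intro i _
    exact fkphi_continuous.comp_continuousOn
      (continuousOn_of_forall_continuousAt fun s hs => (hode i s hs.1).continuousAt)
  have hf0 : f 0 = 0 :=
    Finset.sum_eq_zero fun i _ => fkphi_eq_zero (hinit i).1 (hinit i).2
  obtain ⟨s₀, hs₀mem, hs₀⟩ := isCompact_Icc.exists_isMaxOn (Set.nonempty_Icc.2 ht) hcont
  set C := f s₀ with hC_def
  have hC : ∀ s ∈ Icc (0:ℝ) t, f s ≤ C := fun s hs => hs₀ hs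
  have hC0 : 0 ≤ C := hfnonneg s₀
  set K : ℝ := (∑ j, ∑ i ∈ univ.erase j, w j i) + (∑ j, α j) * (1 + C) with hK_def
  have hmain : ∀ x ∈ Icc (0:ℝ) t, f x ≤ gronwallBound 0 K 0 (x - 0) := by
    apply le_gronwallBound_of_liminf_deriv_right_le hcont (f' := fun x => K * f x)
    · -- liminf slope condition
      intro x hx r hr
      set η : ℝ := (r - K * f x) / (M + 1) with hη_def
      have hMpos : (0:ℝ) < M + 1 := by positivity
      have hηpos : 0 < η := div_pos (by linarith) hMpos
      have hfx : 0 ≤ f x := hfnonneg x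
      have hfxC : f x ≤ C := hC x (Set.Ico_subset_Icc_self hx)
      have key : ∀ j : Fin M, ∃ b : ℝ,
          b ≤ (∑ i ∈ univ.erase j, w j i) * f x + α j * (1 + C) * fkphi (c x j) ∧
          ∀ᶠ z in 𝓝[>] x, fkphi (c z j) - fkphi (c x j) ≤ (z - x) * (b + η) := by
        intro j
        have hD := hderiv j x hx.1
        set D := (∑ i ∈ univ.erase j, w j i * (c x i - c x j)) + α j * c x j * (1 - c x j)
          with hD_def
        have hcont_j : ContinuousAt (fun s => c s j) x := hD.continuousAt
        have hreacpos : 0 ≤ α j * (1 + C) * fkphi (c x j) :=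
          mul_nonneg (mul_nonneg (hα j) (by linarith)) (fkphi_nonneg _)
        have hWpos : 0 ≤ (∑ i ∈ univ.erase j, w j i) * f x :=
          mul_nonneg (Finset.sum_nonneg fun i _ => hnonneg j i) hfx
        have hlap : ∀ (hcj : ∀ i : Fin M, c x i - c x j ≤ f x),
            ∑ i ∈ univ.erase j, w j i * (c x i - c x j)
              ≤ (∑ i ∈ univ.erase j, w j i) * f x := by
          intro hcj
          rw [Finset.sum_mul]
          exact Finset.sum_le_sum fun i _ =>
            mul_le_mul_of_nonneg_left (hcj i) (hnonneg j i)
        have hlapneg : ∀ (hcj : ∀ i : Fin M, c x j - c x i ≤ f x),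
            -∑ i ∈ univ.erase j, w j i * (c x i - c x j)
              ≤ (∑ i ∈ univ.erase j, w j i) * f x := by
          intro hcj
          rw [← Finset.sum_neg_distrib, Finset.sum_mul]
          refine Finset.sum_le_sum fun i _ => ?_
          have : -(w j i * (c x i - c x j)) = w j i * (c x j - c x i) := by ring
          rw [this]
          exact mul_le_mul_of_nonneg_left (hcj i) (hnonneg j i)
        rcases lt_trichotomy (c x j) 1 with h1 | h1 | h1
        · rcases lt_trichotomy (c x j) 0 with h0 | h0 | h0
          · -- c x j < 0
            refine ⟨-D, ?_, ?_⟩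
            · have hl : -∑ i ∈ univ.erase j, w j i * (c x i - c x j)
                  ≤ (∑ i ∈ univ.erase j, w j i) * f x := by
                apply hlapneg
                intro i
                have h5 := neg_le_fkphi (c x i)
                have h6 := hphi_le_f x i
                linarith
              have hr : -(α j * c x j * (1 - c x j)) ≤ α j * (1 + C) * fkphi (c x j) := by
                rw [fkphi_of_nonpos h0.le]
                have h7 : fkphi (c x j) ≤ C := le_trans (hphi_le_f x j) hfxC
                rw [fkphi_of_nonpos h0.le] at h7
                have h8 : (0:ℝ) ≤ -c x j := by linarith
                have h9 : α j * (1 - c x j) ≤ α j * (1 + C) :=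
                  mul_le_mul_of_nonneg_left (by linarith) (hα j)
                calc -(α j * c x j * (1 - c x j)) = α j * (1 - c x j) * -c x j := by ring
                  _ ≤ α j * (1 + C) * -c x j := mul_le_mul_of_nonneg_right h9 h8
              rw [hD_def]
              linarith
            · have hev1 : ∀ᶠ z in 𝓝[>] x, c z j < 0 :=
                (hcont_j.eventually (eventually_lt_nhds h0)).filter_mono nhdsWithin_le_nhds
              filter_upwards [hev1, ev_slope_lower hD hηpos] with z hz1 hz2
              rw [fkphi_of_nonpos hz1.le, fkphi_of_nonpos h0.le]
              have : (z - x) * (-D + η) = -((z - x) * (D - η)) := by ring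
              linarith
          · -- c x j = 0
            refine ⟨max (-D) 0, ?_, ?_⟩
            · have hl : -∑ i ∈ univ.erase j, w j i * (c x i - c x j)
                  ≤ (∑ i ∈ univ.erase j, w j i) * f x := by
                apply hlapneg
                intro i
                have h5 := neg_le_fkphi (c x i)
                have h6 := hphi_le_f x i
                rw [h0]
                linarith
              have hr : α j * c x j * (1 - c x j) = 0 := by rw [h0]; ring
              have hmax : max (-D) 0 ≤ (∑ i ∈ univ.erase j, w j i) * f x := by
                apply max_le _ hWpos
                rw [hD_def]
                linarith [hl, hr]
              linarith
            · have hev1 : ∀ᶠ z in 𝓝[>] x, c z j < 1 :=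
                (hcont_j.eventually (eventually_lt_nhds (show c x j < 1 by rw [h0]; norm_num))).filter_mono
                  nhdsWithin_le_nhds
              filter_upwards [hev1, ev_slope_lower hD hηpos, self_mem_nhdsWithin]
                with z hz1 hz2 hzx
              have hzx' : (0:ℝ) ≤ z - x := by
                have : x < z := hzx
                linarith
              have hz0 : fkphi (c x j) = 0 := by
                rw [h0]; exact fkphi_eq_zero le_rfl (by norm_num)
              rw [fkphi_of_le_one hz1.le, hz0]
              rw [h0] at hz2
              have h3 : -(c z j) ≤ (z - x) * (-D + η) := by nlinarith
              have h4 : (z - x) * (-D + η) ≤ (z - x) * (max (-D) 0 + η) :=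
                mul_le_mul_of_nonneg_left (by simp [le_max_left, add_le_add_right]) hzx'
              have h5 : (0:ℝ) ≤ (z - x) * (max (-D) 0 + η) :=
                mul_nonneg hzx' (add_nonneg (le_max_right _ _) hηpos.le)
              rw [sub_zero]
              exact max_le (h3.trans h4) h5
          · -- 0 < c x j < 1
            refine ⟨0, by linarith, ?_⟩
            have hev1 : ∀ᶠ z in 𝓝[>] x, 0 < c z j :=
              (hcont_j.eventually (eventually_gt_nhds h0)).filter_mono nhdsWithin_le_nhds
            have hev2 : ∀ᶠ z in 𝓝[>] x, c z j < 1 :=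
              (hcont_j.eventually (eventually_lt_nhds h1)).filter_mono nhdsWithin_le_nhds
            filter_upwards [hev1, hev2, self_mem_nhdsWithin] with z hz1 hz2 hzx
            have hzx' : (0:ℝ) ≤ z - x := by
              have : x < z := hzx
              linarith
            rw [fkphi_eq_zero hz1.le hz2.le, fkphi_eq_zero h0.le h1.le]
            have : (0:ℝ) ≤ (z - x) * (0 + η) := mul_nonneg hzx' (by linarith)
            linarith
        · -- c x j = 1
          refine ⟨max D 0, ?_, ?_⟩
          · have hl : ∑ i ∈ univ.erase j, w j i * (c x i - c x j)
                ≤ (∑ i ∈ univ.erase j, w j i) * f x := by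
              apply hlap
              intro i
              have h5 := sub_one_le_fkphi (c x i)
              have h6 := hphi_le_f x i
              rw [h1]
              linarith
            have hr : α j * c x j * (1 - c x j) = 0 := by rw [h1]; ring
            have hmax : max D 0 ≤ (∑ i ∈ univ.erase j, w j i) * f x := by
              apply max_le _ hWpos
              rw [hD_def]
              linarith [hl, hr]
            linarith
          · have hev1 : ∀ᶠ z in 𝓝[>] x, 0 < c z j :=
              (hcont_j.eventually (eventually_gt_nhds (show (0:ℝ) < c x j by rw [h1]; norm_num))).filter_mono
                nhdsWithin_le_nhds
            filter_upwards [hev1, ev_slope_upper hD hηpos, self_mem_nhdsWithin]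
              with z hz1 hz2 hzx
            have hzx' : (0:ℝ) ≤ z - x := by
              have : x < z := hzx
              linarith
            have hz0 : fkphi (c x j) = 0 := by
              rw [h1]; exact fkphi_eq_zero (by norm_num) le_rfl
            rw [fkphi_of_nonneg hz1.le, hz0]
            rw [h1] at hz2
            have h3 : c z j - 1 ≤ (z - x) * (D + η) := by linarith
            have h4 : (z - x) * (D + η) ≤ (z - x) * (max D 0 + η) :=
              mul_le_mul_of_nonneg_left (by simp [le_max_left, add_le_add_right]) hzx'
            have h5 : (0:ℝ) ≤ (z - x) * (max D 0 + η) :=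
              mul_nonneg hzx' (add_nonneg (le_max_right _ _) hηpos.le)
            rw [sub_zero]
            exact max_le (h3.trans h4) h5
        · -- c x j > 1
          refine ⟨D, ?_, ?_⟩
          · have hl : ∑ i ∈ univ.erase j, w j i * (c x i - c x j)
                ≤ (∑ i ∈ univ.erase j, w j i) * f x := by
              apply hlap
              intro i
              have h5 := sub_one_le_fkphi (c x i)
              have h6 := hphi_le_f x i
              linarith
            have hr : α j * c x j * (1 - c x j) ≤ 0 :=
              mul_nonpos_of_nonneg_of_nonpos (mul_nonneg (hα j) (by linarith)) (by linarith)
            rw [hD_def]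
            linarith
          · have hev1 : ∀ᶠ z in 𝓝[>] x, 1 < c z j :=
              (hcont_j.eventually (eventually_gt_nhds h1)).filter_mono nhdsWithin_le_nhds
            filter_upwards [hev1, ev_slope_upper hD hηpos] with z hz1 hz2
            rw [fkphi_of_one_le hz1.le, fkphi_of_one_le h1.le]
            linarith
      choose b hb1 hb2 using key
      have hsumb : ∑ j, b j ≤ K * f x := by
        have step1 : ∑ j, b j ≤ ∑ j, ((∑ i ∈ univ.erase j, w j i) * f x
            + α j * (1 + C) * fkphi (c x j)) := Finset.sum_le_sum fun j _ => hb1 j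
        have step2 : ∑ j, ((∑ i ∈ univ.erase j, w j i) * f x
            + α j * (1 + C) * fkphi (c x j))
            = (∑ j, ∑ i ∈ univ.erase j, w j i) * f x
              + (1 + C) * ∑ j, α j * fkphi (c x j) := by
          rw [Finset.sum_add_distrib, Finset.sum_mul, Finset.mul_sum]
          congr 1
          refine Finset.sum_congr rfl fun j _ => ?_
          ring
        have step3 : ∑ j, α j * fkphi (c x j) ≤ (∑ j, α j) * f x := by
          rw [Finset.sum_mul]
          refine Finset.sum_le_sum fun j _ => ?_
          have h7 : α j ≤ ∑ i, α i :=
            Finset.single_le_sum (fun i _ => hα i) (Finset.mem_univ j)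
          have h8 := fkphi_nonneg (c x j)
          have h9 := hphi_le_f x j
          nlinarith [hα j]
        rw [hK_def]
        have h10 : (1 + C) * ∑ j, α j * fkphi (c x j) ≤ (1 + C) * ((∑ j, α j) * f x) :=
          mul_le_mul_of_nonneg_left step3 (by linarith)
        nlinarith [step1, step2]
      apply Filter.Eventually.frequently
      have hall : ∀ᶠ z in 𝓝[>] x, ∀ j : Fin M,
          fkphi (c z j) - fkphi (c x j) ≤ (z - x) * (b j + η) := eventually_all.2 hb2
      filter_upwards [hall, self_mem_nhdsWithin] with z hz hzx
      have hzx' : (0:ℝ) < z - x := by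
        have : x < z := hzx
        linarith
      have h1 : f z - f x ≤ (z - x) * (∑ j, b j + M * η) := by
        have e1 : f z - f x = ∑ j, (fkphi (c z j) - fkphi (c x j)) := by
          rw [hf_def, Finset.sum_sub_distrib]
        rw [e1]
        calc ∑ j, (fkphi (c z j) - fkphi (c x j))
            ≤ ∑ j : Fin M, (z - x) * (b j + η) := Finset.sum_le_sum fun j _ => hz j
          _ = (z - x) * (∑ j, b j + M * η) := by
              rw [← Finset.mul_sum, Finset.sum_add_distrib, Finset.sum_const,
                Finset.card_univ, Fintype.card_fin, nsmul_eq_mul]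
      have h2 : (z - x)⁻¹ * (f z - f x) ≤ ∑ j, b j + M * η := by
        rw [inv_mul_le_iff₀ hzx']
        exact h1
      have h3 : (M:ℝ) * η < ((M:ℝ) + 1) * η := by nlinarith
      have h4 : ((M:ℝ) + 1) * η = r - K * f x := by
        rw [hη_def]
        field_simp
      linarith
    · rw [hf0]
    · intro x _
      linarith
  have hft : f t ≤ 0 := by
    have := hmain t (Set.right_mem_Icc.2 ht)
    rwa [sub_zero, gronwallBound_ε0_δ0] at this
  have hft0 : f t = 0 := le_antisymm hft (hfnonneg t)
  intro j
  have hphit : fkphi (c t j) = 0 := by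
    have := (Finset.sum_eq_zero_iff_of_nonneg (fun i (_ : i ∈ Finset.univ) => fkphi_nonneg (c t i))).mp
      hft0 j (Finset.mem_univ j)
    exact this
  constructor
  · have := neg_le_fkphi (c t j)
    rw [hphit] at this
    linarith
  · have := sub_one_le_fkphi (c t j)
    rw [hphit] at this
    linarith
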